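/- There exists a constant C > 0 such that for every integer j ≥ 1, every real x ≥ 0 and every real γ with 0 ≤ γ ≤ 2, one has x^{γ/2} · |e^{−jx} − (1 + x)^{−j}| ≤ C / j (with the convention 0^0 = 1). -/

import Mathlib

/-- Scalar (spectral) form of the backward-Euler error estimate
`‖e^{jτA_h} − (I − τA_h)^{−j}‖ ≤ C τ^{−γ/2} j^{−1}`: there is `C > 0` with
`x^{γ/2} |e^{−jx} − (1+x)^{−j}| ≤ C / j` for all integers `j ≥ 1`, reals
`x ≥ 0` and `0 ≤ γ ≤ 2` (real powers, `0^0 = 1`). -/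
theorem stmt_6 :
    ∃ C : ℝ, 0 < C ∧ ∀ j : ℕ, 1 ≤ j → ∀ x : ℝ, 0 ≤ x → ∀ γ : ℝ, 0 ≤ γ → γ ≤ 2 →
      x ^ (γ / 2) * |Real.exp (-(j : ℝ) * x) - (1 + x) ^ (-(j : ℝ))| ≤ C / j := by
  refine ⟨11, by norm_num, ?_⟩
  intro j hj x hx γ hγ0 hγ2
  rw [neg_mul]
  have hx1 : (0:ℝ) < 1 + x := by linarith
  have hj1 : (1:ℝ) ≤ (j:ℝ) := by exact_mod_cast hj
  have hj0 : (0:ℝ) < (j:ℝ) := by linarith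
  have hpowpos : (0:ℝ) < (1+x)^j := pow_pos hx1 j
  have hpow : (1 + x) ^ (-(j:ℝ)) = ((1+x)^j)⁻¹ := by
    rw [Real.rpow_neg hx1.le, Real.rpow_natCast]
  have hBern : ∀ n : ℕ, 1 + (n:ℝ)*x ≤ (1+x)^n := by
    intro n
    have := one_add_mul_le_pow (by linarith : (-2:ℝ) ≤ x) n
    linarith [this]
  have hexppow : (1+x)^j ≤ Real.exp ((j:ℝ)*x) := by
    calc (1+x)^j ≤ (Real.exp x)^j :=
          pow_le_pow_left₀ hx1.le (by linarith [Real.add_one_le_exp x]) j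
      _ = Real.exp ((j:ℝ)*x) := by rw [← Real.exp_nat_mul]
  have hle : Real.exp (-((j:ℝ)*x)) ≤ ((1+x)^j)⁻¹ := by
    rw [Real.exp_neg]
    exact inv_anti₀ hpowpos hexppow
  set D : ℝ := ((1+x)^j)⁻¹ - Real.exp (-((j:ℝ)*x)) with hD
  have hDnonneg : 0 ≤ D := sub_nonneg.mpr hle
  have hDleinv : D ≤ ((1+x)^j)⁻¹ := sub_le_self _ (Real.exp_pos _).le
  have habs : |Real.exp (-((j:ℝ)*x)) - (1 + x) ^ (-(j:ℝ))| = D := by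
    rw [hpow, abs_sub_comm, abs_of_nonneg hDnonneg]
  -- bound x*D ≤ 1/j
  have hxD : x * D ≤ 1 / j := by
    have h1 : (j:ℝ) * x ≤ (1+x)^j := by have := hBern j; linarith
    have hxinv : x * ((1+x)^j)⁻¹ ≤ 1 / j := by
      rcases eq_or_lt_of_le hx with h | h
      · rw [← h, zero_mul]; positivity
      · have hjx : (0:ℝ) < (j:ℝ)*x := by positivity
        calc x * ((1+x)^j)⁻¹ ≤ x * ((j:ℝ)*x)⁻¹ :=
              mul_le_mul_of_nonneg_left (inv_anti₀ hjx h1) hx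
          _ = 1 / (j:ℝ) := by
              field_simp
    calc x * D ≤ x * ((1+x)^j)⁻¹ := mul_le_mul_of_nonneg_left hDleinv hx
      _ ≤ 1 / j := hxinv
  -- bound D ≤ 9/j
  have hDle : D ≤ 9 / j := by
    rcases Nat.lt_or_ge j 2 with h2 | h2
    · have hj1' : j = 1 := by omega
      subst hj1'
      have : ((1+x)^1)⁻¹ ≤ 1 := by
        rw [pow_one]
        calc (1+x)⁻¹ ≤ 1⁻¹ := inv_anti₀ one_pos (by linarith)
          _ = 1 := inv_one
      simp only [Nat.cast_one, div_one]
      calc D ≤ ((1+x)^1)⁻¹ := hDleinv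
        _ ≤ 1 := this
        _ ≤ 9 := by norm_num
    · rcases eq_or_lt_of_le hx with hx0 | hx0
      · have : D = 0 := by simp [hD, ← hx0]
        rw [this]; positivity
      · set L := Real.log (1+x) with hL
        have hLx : L ≤ x := by
          have := Real.log_le_sub_one_of_pos hx1
          simpa using this
        have hxL : x - L ≤ x^2 := by
          have h := Real.log_le_sub_one_of_pos (show (0:ℝ) < (1+x)⁻¹ by positivity)
          rw [Real.log_inv] at h
          have hLlb : 1 - (1+x)⁻¹ ≤ L := by rw [hL]; linarith [h]
          have hmul : (1+x)⁻¹ * (1+x) = 1 := inv_mul_cancel₀ hx1.ne'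
          nlinarith [mul_nonneg (mul_nonneg hx hx) hx, sq_nonneg x]
        have hexpL : Real.exp ((j:ℝ)*L) = (1+x)^j := by
          rw [Real.exp_nat_mul, Real.exp_log hx1]
        have hinvexp : ((1+x)^j)⁻¹ = Real.exp (-((j:ℝ)*L)) := by
          rw [Real.exp_neg, hexpL]
        have hkey : D ≤ ((j:ℝ)*x - (j:ℝ)*L) * Real.exp (-((j:ℝ)*L)) := by
          have h1 : Real.exp (-((j:ℝ)*L)) * (1 + ((j:ℝ)*L - (j:ℝ)*x))
              ≤ Real.exp (-((j:ℝ)*x)) := by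
            calc Real.exp (-((j:ℝ)*L)) * (1 + ((j:ℝ)*L - (j:ℝ)*x))
                ≤ Real.exp (-((j:ℝ)*L)) * Real.exp ((j:ℝ)*L - (j:ℝ)*x) :=
                  mul_le_mul_of_nonneg_left
                    (by linarith [Real.add_one_le_exp ((j:ℝ)*L - (j:ℝ)*x)])
                    (Real.exp_pos _).le
              _ = Real.exp (-((j:ℝ)*x)) := by rw [← Real.exp_add]; ring_nf
          have hDeq : D = Real.exp (-((j:ℝ)*L)) - Real.exp (-((j:ℝ)*x)) := by
            rw [hD, hinvexp]
          rw [hDeq]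
          nlinarith [Real.exp_pos (-((j:ℝ)*L))]
        have hquad : ((j:ℝ)*x/3)^2 ≤ (1+x)^j := by
          set m := j / 2 with hm
          have h3m : j ≤ 3*m := by omega
          have h2m : 2*m ≤ j := by omega
          calc ((j:ℝ)*x/3)^2 ≤ ((m:ℝ)*x)^2 := by
                apply pow_le_pow_left₀ (by positivity)
                have h3m' : (j:ℝ) ≤ 3*(m:ℝ) := by exact_mod_cast h3m
                nlinarith
            _ ≤ (1 + (m:ℝ)*x)^2 := by
                apply pow_le_pow_left₀ (by positivity)
                linarith
            _ ≤ ((1+x)^m)^2 := by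
                apply pow_le_pow_left₀ (by positivity)
                exact hBern m
            _ = (1+x)^(2*m) := by rw [← pow_mul, mul_comm]
            _ ≤ (1+x)^j := pow_le_pow_right₀ (by linarith) h2m
        have hjx2 : (0:ℝ) < ((j:ℝ)*x/3)^2 := by positivity
        calc D ≤ ((j:ℝ)*x - (j:ℝ)*L) * Real.exp (-((j:ℝ)*L)) := hkey
          _ = ((j:ℝ)*(x - L)) * ((1+x)^j)⁻¹ := by rw [hinvexp]; ring
          _ ≤ (j:ℝ)*x^2 * ((1+x)^j)⁻¹ := by
              apply mul_le_mul_of_nonneg_right _ (by positivity)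
              exact mul_le_mul_of_nonneg_left hxL hj0.le
          _ ≤ (j:ℝ)*x^2 * (((j:ℝ)*x/3)^2)⁻¹ :=
              mul_le_mul_of_nonneg_left (inv_anti₀ hjx2 hquad) (by positivity)
          _ = 9 / j := by
              field_simp
              ring
  -- final assembly
  have hrpow : x ^ (γ/2) ≤ 1 + x := by
    rcases le_total x 1 with h | h
    · calc x ^ (γ/2) ≤ 1 := Real.rpow_le_one hx h (by linarith)
        _ ≤ 1 + x := by linarith
    · calc x ^ (γ/2) ≤ x ^ (1:ℝ) := Real.rpow_le_rpow_of_exponent_le h (by linarith)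
        _ = x := Real.rpow_one x
        _ ≤ 1 + x := by linarith
  rw [habs]
  calc x ^ (γ/2) * D ≤ (1+x) * D :=
        mul_le_mul_of_nonneg_right hrpow hDnonneg
    _ = D + x * D := by ring
    _ ≤ 9/j + 1/j := add_le_add hDle hxD
    _ ≤ 11 / j := by
        rw [← add_div]
        gcongr
        norm_num
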